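/- Let q, d ≥ 2 be integers. For all integers θ_w, θ_1, θ_0, the density δ(q, d; 0, θ_w, 0, θ_1, θ_0) exists; that is, the limit lim_{N→∞} (1/N)·|{n < N : θ_w·w_q(n) + θ_1·n + θ_0 ≡ 0 (mod d)}| exists. -/

import Mathlib

open Filter

/-- `vq q n` is the `q`-adic valuation: `0` if `n = 0`, and otherwise the
largest `k` such that `q ^ k` divides `n`. -/
noncomputable def vq (q n : ℕ) : ℕ := if n = 0 then 0 else sSup {k : ℕ | q ^ k ∣ n}

/-- `wq q n = ∑_{i=0}^n vq q i`. -/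
noncomputable def wq (q n : ℕ) : ℕ := ∑ i ∈ Finset.range (n + 1), vq q i

/-- `uq q n = ∑_{i=0}^n wq q i`. -/
noncomputable def uq (q n : ℕ) : ℕ := ∑ i ∈ Finset.range (n + 1), wq q i

/-- `gamma q d tu tw t2 t1 t0 A` is the number of `n < A` with
`tu·u_q(n) + tw·w_q(n) + t2·n(n+1)/2 + t1·n + t0 ≡ 0 (mod d)`. -/
noncomputable def gamma (q d : ℕ) (tu tw t2 t1 t0 : ℤ) (A : ℕ) : ℕ :=
  ((Finset.range A).filter fun n =>
    (tu * uq q n + tw * wq q n + t2 * (n * (n + 1) / 2 : ℕ) + t1 * n + t0) % (d : ℤ) = 0).card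

open Finset

set_option linter.unusedSectionVars false

section A
variable {q : ℕ} (hq : 2 ≤ q)
include hq

lemma bddAbove_S {n : ℕ} (hn : n ≠ 0) : BddAbove {k : ℕ | q ^ k ∣ n} := by
  refine ⟨n, fun k hk => ?_⟩
  have h1 : q ^ k ≤ n := Nat.le_of_dvd (Nat.pos_of_ne_zero hn) hk
  have h2 : k < q ^ k := Nat.lt_pow_self (n := k) (by omega)
  omega

lemma vq_eq_zero {n : ℕ} (h : ¬ q ∣ n) : vq q n = 0 := by
  have hn : n ≠ 0 := by rintro rfl; exact h (dvd_zero q)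
  rw [vq, if_neg hn]
  refine Nat.le_zero.mp (csSup_le ⟨0, by simp⟩ ?_)
  rintro (_ | k) hk
  · exact le_refl 0
  · exact absurd (dvd_trans (dvd_pow_self q (Nat.succ_ne_zero k)) hk) h

lemma vq_mul {n : ℕ} (hn : n ≠ 0) : vq q (q * n) = vq q n + 1 := by
  have hqn : q * n ≠ 0 := by positivity
  rw [vq, if_neg hqn, vq, if_neg hn]
  have hmem : sSup {k : ℕ | q ^ k ∣ n} ∈ {k : ℕ | q ^ k ∣ n} :=
    Nat.sSup_mem ⟨0, by simp⟩ (bddAbove_S hq hn)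
  apply le_antisymm
  · refine csSup_le ⟨0, by simp⟩ ?_
    rintro (_ | k) hk
    · omega
    · have : q ^ k ∣ n := by
        have := hk
        simp only [Set.mem_setOf_eq, pow_succ'] at this
        exact (mul_dvd_mul_iff_left (by omega : q ≠ 0)).mp this
      have := le_csSup (bddAbove_S hq hn) this
      omega
  · refine le_csSup (bddAbove_S hq hqn) ?_
    simp only [Set.mem_setOf_eq, pow_succ']
    exact mul_dvd_mul_left q hmem

omit hq in
lemma wq_zero : wq q 0 = 0 := by simp [wq, vq]

omit hq in
lemma wq_succ (n : ℕ) : wq q (n + 1) = wq q n + vq q (n + 1) := by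
  rw [wq, wq, Finset.sum_range_succ]

lemma wq_mul_aux : ∀ s, s < q → ∀ t, wq q (q * t + s) = wq q (q * t) := by
  intro s
  induction s with
  | zero => intro _ _; rfl
  | succ s ih =>
    intro hs t
    show wq q ((q * t + s) + 1) = wq q (q * t)
    rw [wq_succ, ih (by omega), vq_eq_zero hq, Nat.add_zero]
    intro hdvd
    have h1 : q ∣ s + 1 := by
      have : q * t + s + 1 = q * t + (s + 1) := by omega
      rw [this] at hdvd
      exact (Nat.dvd_add_right ⟨t, rfl⟩).mp hdvd
    have := Nat.le_of_dvd (by omega) h1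
    omega

lemma wq_mul : ∀ t, wq q (q * t) = wq q t + t := by
  intro t
  induction t with
  | zero => simp [wq_zero]
  | succ t ih =>
    have h1 : q * (t + 1) = q * t + (q - 1) + 1 := by
      have : 1 ≤ q := by omega
      ring_nf; omega
    rw [h1, wq_succ]
    have h2 : q * t + (q - 1) = q * t + (q - 1) := rfl
    rw [wq_mul_aux hq (q - 1) (by omega) t, ← h1, vq_mul hq (Nat.succ_ne_zero t), ih, wq_succ]
    simp only [Nat.succ_eq_add_one]
    omega

lemma wq_mul_add {t s : ℕ} (hs : s < q) : wq q (q * t + s) = wq q t + t := by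
  rw [wq_mul_aux hq s hs t, wq_mul hq]

end A

/-- geometric sum `1 + q + ... + q^(m-1)` -/
def Egeo (q m : ℕ) : ℕ := ∑ j ∈ Finset.range m, q ^ j

lemma Egeo_succ (q m : ℕ) : Egeo q (m + 1) = Egeo q m + q ^ m := Finset.sum_range_succ _ _

lemma Egeo_succ' (q m : ℕ) : Egeo q (m + 1) = q * Egeo q m + 1 := by
  induction m with
  | zero => simp [Egeo]
  | succ m ih =>
    calc Egeo q (m + 1 + 1) = Egeo q (m + 1) + q ^ (m + 1) := Egeo_succ _ _
      _ = q * Egeo q m + 1 + q * q ^ m := by rw [ih, pow_succ']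
      _ = q * (Egeo q m + q ^ m) + 1 := by ring
      _ = q * Egeo q (m + 1) + 1 := by rw [Egeo_succ]

lemma Egeo_add (q a b : ℕ) : Egeo q (a + b) = Egeo q b + q ^ b * Egeo q a := by
  induction a with
  | zero => simp [Egeo]
  | succ a ih =>
    have h : a + 1 + b = (a + b) + 1 := by omega
    rw [h, Egeo_succ, ih, Egeo_succ, pow_add]
    ring

section B
variable {q : ℕ} (hq : 2 ≤ q)
include hq

lemma wq_block : ∀ m a r, r < q ^ m → wq q (a * q ^ m + r) = wq q r + a * Egeo q m + wq q a := by
  intro m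
  induction m with
  | zero =>
    intro a r hr
    have hr0 : r = 0 := by simpa [Nat.lt_one_iff] using hr
    subst hr0
    simp [Egeo, wq_zero]
  | succ m ih =>
    intro a r hr
    have hq0 : 0 < q := by omega
    have hrq : r / q < q ^ m := by
      rw [Nat.div_lt_iff_lt_mul hq0]
      calc r < q ^ (m + 1) := hr
        _ = q ^ m * q := pow_succ q m
    have hdecomp : a * q ^ (m + 1) + r = q * (a * q ^ m + r / q) + r % q := by
      have := Nat.div_add_mod r q
      rw [pow_succ]
      ring_nf
      omega
    rw [hdecomp, wq_mul_add hq (Nat.mod_lt r hq0), ih a (r / q) hrq]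
    have hr2 : wq q r = wq q (r / q) + r / q := by
      conv_lhs => rw [← Nat.div_add_mod r q]
      rw [wq_mul_add hq (Nat.mod_lt r hq0)]
    rw [hr2, Egeo_succ]
    ring

end B


lemma card_filter_range_mul (P : ℕ → Prop) [DecidablePred P] :
    ∀ B, ∀ T : ℕ, ((range (B * T)).filter P).card
      = ∑ A ∈ range B, ((range T).filter (fun r => P (A * T + r))).card := by
  intro B
  induction B with
  | zero => simp
  | succ B ih =>
    intro T
    have h1 : (B + 1) * T = B * T + T := by ring
    rw [h1, Finset.range_add, Finset.filter_union,
      Finset.card_union_of_disjoint, ih, Finset.sum_range_succ, Finset.filter_map,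
      Finset.card_map]
    · rfl
    · refine Finset.disjoint_filter_filter ?_
      simp only [Finset.disjoint_left, Finset.mem_range, Finset.mem_map,
        addLeftEmbedding_apply]
      rintro a ha ⟨b, hb, rfl⟩
      omega

section Zsec
variable (q d : ℕ) (tw t1 : ℤ)
set_option linter.unusedSectionVars false

/-- the main congruence function -/
noncomputable def Gf (n : ℕ) : ZMod d := (tw : ZMod d) * (wq q n : ℕ) + (t1 : ZMod d) * (n : ℕ)

noncomputable def cseq (m : ℕ) : ZMod d :=
  (tw : ZMod d) * (Egeo q m : ℕ) + (t1 : ZMod d) * (q : ZMod d) ^ m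

noncomputable def Phi (m A : ℕ) : ZMod d :=
  (A : ZMod d) * cseq q d tw t1 m + (tw : ZMod d) * (wq q A : ℕ)

noncomputable def cnt (m : ℕ) (x : ZMod d) : ℕ :=
  ((range (q ^ m)).filter (fun r => Gf q d tw t1 r = x)).card

variable {q d tw t1}
variable (hq : 2 ≤ q)
include hq

lemma wq_one : wq q 1 = 0 := by
  rw [wq_succ, wq_zero, vq_eq_zero hq]
  intro h
  have := Nat.le_of_dvd one_pos h
  omega

lemma wq_pow (n : ℕ) : wq q (q ^ n) = Egeo q n := by
  have := wq_block hq n 1 0 (by positivity)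
  simpa [wq_zero, wq_one hq] using this

lemma cseq_succ (m : ℕ) : cseq q d tw t1 (m + 1) = (q : ZMod d) * cseq q d tw t1 m + (tw : ZMod d) := by
  rw [cseq, cseq, Egeo_succ' q m]
  push_cast
  ring

lemma cseq_shift (k L : ℕ) :
    cseq q d tw t1 (k + L) = (q : ZMod d) ^ L * cseq q d tw t1 k + (tw : ZMod d) * (Egeo q L : ℕ) := by
  rw [cseq, cseq, Egeo_add q k L]
  push_cast
  ring

lemma Gf_block {m a r : ℕ} (hr : r < q ^ m) :
    Gf q d tw t1 (a * q ^ m + r) = Gf q d tw t1 r + Phi q d tw t1 m a := by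
  rw [Gf, Gf, Phi, cseq, wq_block hq m a r hr]
  push_cast
  ring

lemma Phi_concat {L A : ℕ} (B : ℕ) (hA : A < q ^ L) (k : ℕ) :
    Phi q d tw t1 k (B * q ^ L + A)
      = Phi q d tw t1 k A + (B : ZMod d) * cseq q d tw t1 (k + L) + (tw : ZMod d) * (wq q B : ℕ) := by
  rw [Phi, Phi, wq_block hq L B A hA, cseq_shift hq, cseq]
  push_cast
  ring

lemma count_blocks (B m : ℕ) (x : ZMod d) :
    ((range (B * q ^ m)).filter (fun n => Gf q d tw t1 n = x)).card
      = ∑ A ∈ range B, cnt q d tw t1 m (x - Phi q d tw t1 m A) := by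
  rw [card_filter_range_mul]
  refine Finset.sum_congr rfl fun A _ => ?_
  rw [cnt]
  congr 1
  refine Finset.filter_congr fun r hr => ?_
  rw [Gf_block hq (Finset.mem_range.mp hr)]
  constructor
  · intro h; rw [← h]; ring
  · intro h; rw [h]; ring

lemma cnt_split (m L : ℕ) (x : ZMod d) :
    cnt q d tw t1 (m + L) x = ∑ A ∈ range (q ^ L), cnt q d tw t1 m (x - Phi q d tw t1 m A) := by
  rw [cnt, show q ^ (m + L) = q ^ L * q ^ m by rw [pow_add]; ring, count_blocks hq]

end Zsec

theorem main_count (q d : ℕ) (hq : 2 ≤ q) (hd : 2 ≤ d) (tw t1 : ℤ) (t : ZMod d) :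
    ∃ δ : ℝ, Filter.Tendsto
      (fun N : ℕ => ((((range N).filter (fun n => Gf q d tw t1 n = t)).card : ℝ) / N))
      Filter.atTop (nhds δ) := by
  classical
  haveI : NeZero d := ⟨by omega⟩
  -- eventual periodicity of cseq
  obtain ⟨k0, π, hπ, hper⟩ : ∃ k0 π, 0 < π ∧
      ∀ n, cseq q d tw t1 (k0 + n + π) = cseq q d tw t1 (k0 + n) := by
    obtain ⟨i, j, hne, heq⟩ := Finite.exists_ne_map_eq_of_infinite (cseq q d tw t1)
    have key : ∃ i j : ℕ, i < j ∧ cseq q d tw t1 i = cseq q d tw t1 j := by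
      rcases lt_or_gt_of_ne hne with h | h
      exacts [⟨i, j, h, heq⟩, ⟨j, i, h, heq.symm⟩]
    obtain ⟨i, j, hlt, heq⟩ := key
    refine ⟨i, j - i, by omega, ?_⟩
    intro n
    induction n with
    | zero => rw [show i + 0 + (j - i) = j by omega, show i + 0 = i from rfl]; exact heq.symm
    | succ n ih =>
      rw [show i + (n+1) + (j-i) = (i + n + (j-i)) + 1 by omega,
        show i + (n+1) = (i+n) + 1 by omega, cseq_succ hq, cseq_succ hq, ih]
  have hperm : ∀ n jj, cseq q d tw t1 (k0 + n + jj * π) = cseq q d tw t1 (k0 + n) := by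
    intro n jj
    induction jj with
    | zero => simp
    | succ jj ih =>
      rw [show k0 + n + (jj+1) * π = (k0 + (n + jj * π)) + π by ring,
        show (k0 + (n + jj*π)) + π = k0 + (n + jj*π) + π from rfl, hper,
        show k0 + (n + jj*π) = k0 + n + jj*π by ring, ih]
  have hper' : ∀ n, π ∣ n → cseq q d tw t1 (k0 + n) = cseq q d tw t1 k0 := by
    rintro n ⟨c, rfl⟩
    have := hperm 0 c
    rw [show k0 + 0 + c * π = k0 + π * c by ring, show k0 + 0 = k0 from rfl] at this
    exact this
  set H : AddSubgroup (ZMod d) :=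
    AddSubgroup.closure (Set.range fun n => cseq q d tw t1 (k0 + n)) with hH
  have hgen : ∀ n, cseq q d tw t1 (k0 + n) ∈ H :=
    fun n => AddSubgroup.subset_closure ⟨n, rfl⟩
  have hcmem : ∀ m, k0 ≤ m → cseq q d tw t1 m ∈ H := by
    intro m hm
    rw [show m = k0 + (m - k0) by omega]
    exact hgen _
  have hnat_mul_mem : ∀ (A : ℕ) (x : ZMod d), x ∈ H → (A : ZMod d) * x ∈ H := by
    intro A x hx
    rw [← nsmul_eq_mul]
    exact AddSubgroup.nsmul_mem H hx A
  have htwH : (tw : ZMod d) ∈ H := by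
    have h1 := cseq_succ (q := q) (d := d) (tw := tw) (t1 := t1) hq k0
    have h2 : (tw : ZMod d) = cseq q d tw t1 (k0 + 1) - (q : ZMod d) * cseq q d tw t1 k0 := by
      rw [h1]; ring
    rw [h2]
    refine sub_mem (hgen 1) ?_
    have := hnat_mul_mem q _ (hcmem k0 le_rfl)
    simpa using this
  have htwmul : ∀ w : ℕ, (tw : ZMod d) * (w : ZMod d) ∈ H := by
    intro w
    rw [mul_comm]
    exact hnat_mul_mem w _ htwH
  have hPhiH : ∀ m A, k0 ≤ m → Phi q d tw t1 m A ∈ H := by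
    intro m A hm
    exact add_mem (hnat_mul_mem A _ (hcmem m hm)) (htwmul _)
  -- surjectivity of Phi k0 onto H
  have hsurj : ∀ x ∈ H, ∃ A : ℕ, Phi q d tw t1 k0 A = x := by
    intro x hx
    have hadd : ∀ y z : ZMod d, (∃ A, Phi q d tw t1 k0 A = y) → (∃ A, Phi q d tw t1 k0 A = z) →
        ∃ A, Phi q d tw t1 k0 A = y + z := by
      rintro y z ⟨A, rfl⟩ ⟨B, rfl⟩
      refine ⟨B * q ^ (π * (A+1)) + A, ?_⟩
      have hA : A < q ^ (π * (A + 1)) := by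
        calc A < 2 ^ A := Nat.lt_two_pow_self (n := A)
          _ ≤ q ^ A := Nat.pow_le_pow_left hq A
          _ ≤ q ^ (π * (A+1)) := Nat.pow_le_pow_right (by omega) (by nlinarith)
      rw [Phi_concat hq B hA k0, hper' (π * (A+1)) ⟨A+1, rfl⟩]
      simp only [Phi]
      ring
    have hzero : ∃ A, Phi q d tw t1 k0 A = (0 : ZMod d) :=
      ⟨0, by simp [Phi, wq_zero]⟩
    refine AddSubgroup.closure_induction ?_ hzero (fun a b _ _ ha hb => hadd a b ha hb) ?_ hx
    · rintro y ⟨n, rfl⟩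
      refine ⟨q ^ n, ?_⟩
      show Phi q d tw t1 k0 (q ^ n) = cseq q d tw t1 (k0 + n)
      rw [Phi, wq_pow hq n, cseq_shift hq k0 n]
      push_cast
      ring
    · rintro y _ ⟨A, hA⟩
      have hsm : ∀ n : ℕ, ∃ C, Phi q d tw t1 k0 C = n • y := by
        intro n
        induction n with
        | zero => simpa using hzero
        | succ n ih =>
          obtain ⟨C, hC⟩ := ih
          have := hadd _ _ ⟨C, hC⟩ ⟨A, hA⟩
          rw [succ_nsmul]
          simpa [hC, hA] using this
      obtain ⟨C, hC⟩ := hsm (d - 1)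
      refine ⟨C, ?_⟩
      rw [hC]
      have hd0 : (d : ZMod d) = 0 := ZMod.natCast_self d
      have hzero' : (d - 1 : ℕ) • y + y = 0 := by
        calc (d-1 : ℕ) • y + y = ((d-1 : ℕ) + 1) • y := (succ_nsmul y _).symm
          _ = (d : ℕ) • y := by rw [show (d-1) + 1 = d by omega]
          _ = (d : ZMod d) * y := by rw [nsmul_eq_mul]
          _ = 0 := by rw [hd0, zero_mul]
      exact (neg_eq_of_add_eq_zero_left hzero').symm
  -- uniform L
  obtain ⟨L, hL0, hLdvd, g, hg⟩ :
      ∃ L, 0 < L ∧ π ∣ L ∧ ∃ g : ZMod d → ℕ,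
        ∀ x ∈ H, g x < q ^ L ∧ Phi q d tw t1 k0 (g x) = x := by
    choose f hf using hsurj
    set g : ZMod d → ℕ := fun x => if hx : x ∈ H then f x hx else 0 with hgdef
    set M := Finset.univ.sup g with hM
    have hMle : ∀ x, g x ≤ M := fun x => Finset.le_sup (Finset.mem_univ x)
    refine ⟨π * (M + 1), by positivity, ⟨M+1, rfl⟩, g, ?_⟩
    intro x hx
    constructor
    · calc g x ≤ M := hMle x
        _ < 2 ^ (M+1) := by
            have := Nat.lt_two_pow_self (n := M)
            have h2 : (2:ℕ) ^ M ≤ 2 ^ (M+1) := Nat.pow_le_pow_right (by omega) (by omega)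
            omega
        _ ≤ q ^ (M+1) := Nat.pow_le_pow_left hq _
        _ ≤ q ^ (π * (M+1)) := Nat.pow_le_pow_right (by omega) (by nlinarith)
    · simp only [hgdef, dif_pos hx]
      exact hf x hx
  set HF : Finset (ZMod d) := Finset.univ.filter (· ∈ H) with hHF
  have hmemHF : ∀ x : ZMod d, x ∈ HF ↔ x ∈ H := by intro x; simp [hHF]
  set h := HF.card with hh
  have hh0 : 0 < h := Finset.card_pos.mpr ⟨0, (hmemHF 0).mpr (zero_mem H)⟩
  have hinj2 : ∀ a ∈ HF, ∀ b ∈ HF, g a = g b → a = b := by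
    intro a ha b hb hab
    rw [← (hg a ((hmemHF a).mp ha)).2, ← (hg b ((hmemHF b).mp hb)).2, hab]
  have hhL : h ≤ q ^ L := by
    calc h = (HF.image g).card := (Finset.card_image_of_injOn hinj2).symm
      _ ≤ (range (q^L)).card := Finset.card_le_card (by
          intro x hx
          obtain ⟨z, hz, rfl⟩ := Finset.mem_image.mp hx
          exact Finset.mem_range.mpr (hg z ((hmemHF z).mp hz)).1)
      _ = q ^ L := Finset.card_range _
  -- Doeblin contraction step
  have doeblin : ∀ m e, cseq q d tw t1 m = cseq q d tw t1 k0 →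
      (∀ x y : ZMod d, x - y ∈ H → cnt q d tw t1 m x ≤ cnt q d tw t1 m y + e) →
      (∀ x y : ZMod d, x - y ∈ H →
        cnt q d tw t1 (m + L) x ≤ cnt q d tw t1 (m + L) y + (q ^ L - h) * e) := by
    intro m e hm hB x y hxy
    have hPhim : ∀ A, Phi q d tw t1 m A = Phi q d tw t1 k0 A := by
      intro A; rw [Phi, Phi, hm]
    have hsx := cnt_split (tw := tw) (t1 := t1) hq m L x
    have hsy := cnt_split (tw := tw) (t1 := t1) hq m L y
    set RepF := HF.image g with hRepF
    have hsub : RepF ⊆ range (q ^ L) := by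
      intro A hA
      obtain ⟨z, hz, rfl⟩ := Finset.mem_image.mp hA
      exact Finset.mem_range.mpr (hg z ((hmemHF z).mp hz)).1
    have hcardRep : RepF.card = h := Finset.card_image_of_injOn hinj2
    have hsumRep : ∀ z : ZMod d,
        ∑ A ∈ RepF, cnt q d tw t1 m (z - Phi q d tw t1 m A)
          = ∑ w ∈ HF, cnt q d tw t1 m (z - w) := by
      intro z
      rw [hRepF, Finset.sum_image hinj2]
      refine Finset.sum_congr rfl fun w hw => ?_
      rw [hPhim, (hg w ((hmemHF w).mp hw)).2]
    have hHFtrans : ∑ w ∈ HF, cnt q d tw t1 m (x - w)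
        = ∑ w ∈ HF, cnt q d tw t1 m (y - w) := by
      refine Finset.sum_nbij' (fun w => w - (x - y)) (fun w => w + (x - y)) ?_ ?_ ?_ ?_ ?_
      · intro a ha
        exact (hmemHF _).mpr (sub_mem ((hmemHF a).mp ha) hxy)
      · intro a ha
        exact (hmemHF _).mpr (add_mem ((hmemHF a).mp ha) hxy)
      · intro a _; ring
      · intro a _; ring
      · intro a _
        congr 1
        ring
    have hsplitx : ∑ A ∈ range (q^L), cnt q d tw t1 m (x - Phi q d tw t1 m A)
        = ∑ A ∈ range (q^L) \ RepF, cnt q d tw t1 m (x - Phi q d tw t1 m A)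
          + ∑ A ∈ RepF, cnt q d tw t1 m (x - Phi q d tw t1 m A) :=
      (Finset.sum_sdiff hsub).symm
    have hsplity : ∑ A ∈ range (q^L), cnt q d tw t1 m (y - Phi q d tw t1 m A)
        = ∑ A ∈ range (q^L) \ RepF, cnt q d tw t1 m (y - Phi q d tw t1 m A)
          + ∑ A ∈ RepF, cnt q d tw t1 m (y - Phi q d tw t1 m A) :=
      (Finset.sum_sdiff hsub).symm
    have hbound : ∑ A ∈ range (q^L) \ RepF, cnt q d tw t1 m (x - Phi q d tw t1 m A)
        ≤ (∑ A ∈ range (q^L) \ RepF, cnt q d tw t1 m (y - Phi q d tw t1 m A)) + (q^L - h) * e := by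
      have h1 : ∀ A ∈ range (q^L) \ RepF,
          cnt q d tw t1 m (x - Phi q d tw t1 m A)
            ≤ cnt q d tw t1 m (y - Phi q d tw t1 m A) + e := by
        intro A _
        refine hB _ _ ?_
        rw [show x - Phi q d tw t1 m A - (y - Phi q d tw t1 m A) = x - y by ring]
        exact hxy
      calc ∑ A ∈ range (q^L) \ RepF, cnt q d tw t1 m (x - Phi q d tw t1 m A)
          ≤ ∑ A ∈ range (q^L) \ RepF, (cnt q d tw t1 m (y - Phi q d tw t1 m A) + e) :=
            Finset.sum_le_sum h1
        _ = (∑ A ∈ range (q^L) \ RepF, cnt q d tw t1 m (y - Phi q d tw t1 m A))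
            + (range (q^L) \ RepF).card * e := by
            rw [Finset.sum_add_distrib, Finset.sum_const, smul_eq_mul]
        _ = (∑ A ∈ range (q^L) \ RepF, cnt q d tw t1 m (y - Phi q d tw t1 m A)) + (q^L - h) * e := by
            rw [Finset.card_sdiff_of_subset hsub, Finset.card_range, hcardRep]
    have e1 := hsumRep x
    have e2 := hsumRep y
    omega
  -- iterate the contraction
  have hBj : ∀ j : ℕ, ∀ x y : ZMod d, x - y ∈ H →
      cnt q d tw t1 (k0 + j * L) x ≤ cnt q d tw t1 (k0 + j * L) y + q ^ k0 * (q ^ L - h) ^ j := by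
    intro j
    induction j with
    | zero =>
      intro x y _
      have h1 : cnt q d tw t1 (k0 + 0 * L) x ≤ q ^ k0 := by
        rw [show k0 + 0 * L = k0 by omega, cnt]
        calc ((range (q ^ k0)).filter (fun r => Gf q d tw t1 r = x)).card
            ≤ (range (q ^ k0)).card := Finset.card_filter_le _ _
          _ = q ^ k0 := Finset.card_range _
      have h2 : q ^ k0 * (q ^ L - h) ^ 0 = q ^ k0 := by ring
      omega
    | succ j ih =>
      intro x y hxy
      have hm : cseq q d tw t1 (k0 + j * L) = cseq q d tw t1 k0 :=
        hper' (j * L) (Dvd.dvd.mul_left hLdvd j)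
      have := doeblin (k0 + j * L) (q ^ k0 * (q ^ L - h) ^ j) hm ih x y hxy
      rw [show k0 + j * L + L = k0 + (j + 1) * L by ring] at this
      have heq : (q ^ L - h) * (q ^ k0 * (q ^ L - h) ^ j) = q ^ k0 * (q ^ L - h) ^ (j + 1) := by
        ring
      omega
  -- coset masses
  set Q : ℕ → Prop := fun r => Gf q d tw t1 r - t ∈ H with hQdef
  set m0 := ((range (q ^ k0)).filter Q).card with hm0
  have hmass : ∀ k, ((range (q ^ (k0 + k))).filter Q).card = q ^ k * m0 := by
    intro k
    rw [show q ^ (k0 + k) = q ^ k * q ^ k0 by rw [pow_add]; ring,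
      card_filter_range_mul Q (q ^ k) (q ^ k0)]
    have hinner : ∀ A ∈ range (q ^ k),
        ((range (q ^ k0)).filter (fun r => Q (A * q ^ k0 + r))).card = m0 := by
      intro A _
      rw [hm0]
      congr 1
      refine Finset.filter_congr fun r hr => ?_
      show Q (A * q ^ k0 + r) ↔ Q r
      rw [hQdef]
      simp only
      rw [Gf_block hq (Finset.mem_range.mp hr),
        show Gf q d tw t1 r + Phi q d tw t1 k0 A - t = (Gf q d tw t1 r - t) + Phi q d tw t1 k0 A
          by ring]
      exact AddSubgroup.add_mem_cancel_right H (hPhiH k0 A le_rfl)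
    rw [Finset.sum_congr rfl hinner, Finset.sum_const, Finset.card_range, smul_eq_mul]
  set cosetF := HF.image (fun z => t + z) with hcosetF
  have hcosetcard : cosetF.card = h :=
    Finset.card_image_of_injective _ (add_right_injective t)
  have hcosetsum : ∀ k, ∑ x ∈ cosetF, cnt q d tw t1 (k0 + k) x = q ^ k * m0 := by
    intro k
    rw [← hmass k]
    have hmem : ∀ r ∈ (range (q ^ (k0 + k))).filter Q, Gf q d tw t1 r ∈ cosetF := by
      intro r hr
      have hQr : Q r := (Finset.mem_filter.mp hr).2
      exact Finset.mem_image.mpr ⟨Gf q d tw t1 r - t, (hmemHF _).mpr hQr, by ring⟩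
    rw [Finset.card_eq_sum_card_fiberwise hmem]
    refine (Finset.sum_congr rfl fun x hx => ?_).symm
    rw [cnt]
    congr 1
    ext r
    simp only [Finset.mem_filter, Finset.mem_range]
    constructor
    · rintro ⟨⟨h1, h2⟩, h3⟩
      exact ⟨h1, h3⟩
    · rintro ⟨h1, h3⟩
      refine ⟨⟨h1, ?_⟩, h3⟩
      obtain ⟨z, hz, rfl⟩ := Finset.mem_image.mp hx
      show Q r
      rw [hQdef]
      simp only
      rw [h3, show t + z - t = z by ring]
      exact (hmemHF z).mp hz
  -- per-point bounds on the coset of t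
  have hpoint : ∀ (k e : ℕ),
      (∀ x y : ZMod d, x - y ∈ H →
        cnt q d tw t1 (k0 + k) x ≤ cnt q d tw t1 (k0 + k) y + e) →
      ∀ x : ZMod d, x - t ∈ H →
        h * cnt q d tw t1 (k0 + k) x ≤ q ^ k * m0 + h * e ∧
        q ^ k * m0 ≤ h * cnt q d tw t1 (k0 + k) x + h * e := by
    intro k e hB x hx
    have hmemcoset : ∀ y ∈ cosetF, (y - x ∈ H) ∧ (x - y ∈ H) := by
      intro y hy
      obtain ⟨z, hz, rfl⟩ := Finset.mem_image.mp hy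
      have hzH := (hmemHF z).mp hz
      constructor
      · rw [show t + z - x = z - (x - t) by ring]
        exact sub_mem hzH hx
      · rw [show x - (t + z) = (x - t) - z by ring]
        exact sub_mem hx hzH
    constructor
    · calc h * cnt q d tw t1 (k0 + k) x
          = ∑ _y ∈ cosetF, cnt q d tw t1 (k0 + k) x := by
            rw [Finset.sum_const, hcosetcard, smul_eq_mul]
        _ ≤ ∑ y ∈ cosetF, (cnt q d tw t1 (k0 + k) y + e) :=
            Finset.sum_le_sum (fun y hy => hB x y (hmemcoset y hy).2)
        _ = q ^ k * m0 + h * e := by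
            rw [Finset.sum_add_distrib, hcosetsum k, Finset.sum_const, hcosetcard, smul_eq_mul]
    · calc q ^ k * m0 = ∑ y ∈ cosetF, cnt q d tw t1 (k0 + k) y := (hcosetsum k).symm
        _ ≤ ∑ y ∈ cosetF, (cnt q d tw t1 (k0 + k) x + e) :=
            Finset.sum_le_sum (fun y hy => hB y x (hmemcoset y hy).1)
        _ = h * cnt q d tw t1 (k0 + k) x + h * e := by
            rw [Finset.sum_const, hcosetcard, smul_eq_mul, Nat.mul_add]
  clear_value HF h Q m0 cosetF
  have hm0le : m0 ≤ q ^ k0 := by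
    rw [hm0]
    calc ((range (q ^ k0)).filter Q).card ≤ (range (q ^ k0)).card := Finset.card_filter_le _ _
      _ = q ^ k0 := Finset.card_range _
  -- the limit
  refine ⟨(m0 : ℝ) / ((q : ℝ) ^ k0 * h), ?_⟩
  have hq0 : (0:ℝ) < (q : ℝ) := by
    have : (0:ℕ) < q := by omega
    exact_mod_cast this
  have hh0R : (0:ℝ) < (h : ℝ) := by exact_mod_cast hh0
  set δR : ℝ := (m0 : ℝ) / ((q : ℝ) ^ k0 * h) with hδR
  have hδ0 : 0 ≤ δR := by
    rw [hδR]
    positivity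
  have hδprod : δR * ((q : ℝ) ^ k0 * h) = (m0 : ℝ) := by
    rw [hδR]
    field_simp
  have hδ1 : δR ≤ 1 := by
    rw [hδR, div_le_one (by positivity)]
    calc (m0 : ℝ) ≤ (q:ℝ) ^ k0 := by exact_mod_cast hm0le
      _ = (q:ℝ)^k0 * 1 := by ring
      _ ≤ (q:ℝ)^k0 * h := by
          have : (1:ℝ) ≤ (h:ℝ) := by exact_mod_cast hh0
          nlinarith [pow_pos hq0 k0]
  rw [Metric.tendsto_atTop]
  intro ε hε
  have hqLpos : (0:ℕ) < q ^ L := pow_pos (by omega) L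
  have hβlt : ((q ^ L - h : ℕ) : ℝ) / ((q ^ L : ℕ) : ℝ) < 1 := by
    rw [div_lt_one (by exact_mod_cast hqLpos)]
    exact_mod_cast (by omega : q ^ L - h < q ^ L)
  obtain ⟨j, hj⟩ := exists_pow_lt_of_lt_one (show (0:ℝ) < ε / 4 by linarith) hβlt
  set m := k0 + j * L with hmdef
  set e := q ^ k0 * (q ^ L - h) ^ j with hedef
  have hkm : k0 ≤ m := by omega
  have hqmpos : (0:ℕ) < q ^ m := pow_pos (by omega) m
  set Qm : ℝ := (q : ℝ) ^ m with hQm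
  have hQmpos : (0:ℝ) < Qm := by positivity
  have hecast : (e : ℝ) < (ε / 4) * Qm := by
    have h1 : (e : ℝ) = (q:ℝ) ^ k0 * (((q ^ L - h : ℕ)) : ℝ) ^ j := by
      rw [hedef]; push_cast; ring
    have h2 : Qm = (q:ℝ) ^ k0 * (((q ^ L : ℕ)):ℝ) ^ j := by
      rw [hQm, hmdef, pow_add, pow_mul]; push_cast; ring
    have h3 : (((q ^ L - h : ℕ)) : ℝ) ^ j < (ε / 4) * (((q ^ L : ℕ)):ℝ) ^ j := by
      have hd := hj
      rw [div_pow] at hd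
      have hpp : (0:ℝ) < (((q ^ L : ℕ)):ℝ) ^ j := by
        have : (0:ℝ) < ((q ^ L : ℕ):ℝ) := by exact_mod_cast hqLpos
        positivity
      rw [div_lt_iff₀ hpp] at hd
      exact hd
    rw [h1, h2]
    have hk0p : (0:ℝ) < (q:ℝ) ^ k0 := by positivity
    nlinarith
  -- the threshold
  refine ⟨q ^ m * (Nat.ceil (4 / ε) + 1), fun N hN => ?_⟩
  have hNq : q ^ m ≤ N := by
    calc q ^ m = q ^ m * 1 := by ring
      _ ≤ q ^ m * (Nat.ceil (4 / ε) + 1) := by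
          exact Nat.mul_le_mul_left _ (by omega)
      _ ≤ N := hN
  have hNpos : 0 < N := by omega
  have hNR0 : (0:ℝ) < (N:ℝ) := by exact_mod_cast hNpos
  have hQmN : Qm ≤ (N:ℝ) := by
    rw [hQm]
    exact_mod_cast hNq
  have hNbig : 4 * Qm ≤ ε * N := by
    have h1 : (4 / ε) ≤ ((Nat.ceil (4/ε) : ℕ) : ℝ) + 1 := by
      have := Nat.le_ceil (4 / ε)
      linarith
    have h2 : ((q ^ m * (Nat.ceil (4 / ε) + 1) : ℕ) : ℝ) ≤ (N:ℝ) := by exact_mod_cast hN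
    have h3 : ((q ^ m * (Nat.ceil (4 / ε) + 1) : ℕ) : ℝ) = Qm * (((Nat.ceil (4/ε) : ℕ) : ℝ) + 1) := by
      push_cast [hQm]
      ring
    have h4 : Qm * (4 / ε) ≤ Qm * (((Nat.ceil (4/ε) : ℕ) : ℝ) + 1) :=
      mul_le_mul_of_nonneg_left h1 (le_of_lt hQmpos)
    have h5 : Qm * (4 / ε) ≤ (N:ℝ) := by linarith [h3 ▸ h2]
    calc 4 * Qm = ε * (Qm * (4/ε)) := by field_simp
      _ ≤ ε * N := mul_le_mul_of_nonneg_left h5 (le_of_lt hε)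
  -- block sandwich
  set B := N / q ^ m with hBdef
  have hBl : B * q ^ m ≤ N := Nat.div_mul_le_self N (q ^ m)
  have hBu : N < (B + 1) * q ^ m := by
    have h1 : q ^ m * B + N % q ^ m = N := by rw [hBdef]; exact Nat.div_add_mod N (q ^ m)
    have h2 : N % q ^ m < q ^ m := Nat.mod_lt N hqmpos
    have h3 : (B + 1) * q ^ m = q ^ m * B + q ^ m := by ring
    omega
  have hlow : ∑ A ∈ range B, cnt q d tw t1 m (t - Phi q d tw t1 m A)
      ≤ ((range N).filter (fun n => Gf q d tw t1 n = t)).card := by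
    rw [← count_blocks hq B m t]
    exact Finset.card_le_card (Finset.filter_subset_filter _ (Finset.range_subset_range.mpr hBl))
  have hhigh : ((range N).filter (fun n => Gf q d tw t1 n = t)).card
      ≤ ∑ A ∈ range (B + 1), cnt q d tw t1 m (t - Phi q d tw t1 m A) := by
    rw [← count_blocks hq (B + 1) m t]
    exact Finset.card_le_card
      (Finset.filter_subset_filter _ (Finset.range_subset_range.mpr (le_of_lt hBu)))
  set γN := ((range N).filter (fun n => Gf q d tw t1 n = t)).card with hγN
  have hAco : ∀ A : ℕ, (t - Phi q d tw t1 m A) - t ∈ H := by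
    intro A
    rw [show t - Phi q d tw t1 m A - t = -(Phi q d tw t1 m A) by ring]
    exact neg_mem (hPhiH m A hkm)
  have hpt : ∀ A : ℕ,
      h * cnt q d tw t1 m (t - Phi q d tw t1 m A) ≤ q ^ (j * L) * m0 + h * e ∧
      q ^ (j * L) * m0 ≤ h * cnt q d tw t1 m (t - Phi q d tw t1 m A) + h * e :=
    fun A => hpoint (j * L) e (hBj j) _ (hAco A)
  have hup : h * γN ≤ (B + 1) * (q ^ (j * L) * m0 + h * e) := by
    calc h * γN ≤ h * ∑ A ∈ range (B + 1), cnt q d tw t1 m (t - Phi q d tw t1 m A) :=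
          Nat.mul_le_mul_left h hhigh
      _ = ∑ A ∈ range (B + 1), h * cnt q d tw t1 m (t - Phi q d tw t1 m A) :=
          Finset.mul_sum _ _ _
      _ ≤ ∑ _A ∈ range (B + 1), (q ^ (j * L) * m0 + h * e) :=
          Finset.sum_le_sum (fun A _ => (hpt A).1)
      _ = (B + 1) * (q ^ (j * L) * m0 + h * e) := by
          rw [Finset.sum_const, Finset.card_range, smul_eq_mul]
  have hlo : B * (q ^ (j * L) * m0) ≤ h * γN + B * (h * e) := by
    calc B * (q ^ (j * L) * m0) = ∑ _A ∈ range B, (q ^ (j * L) * m0) := by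
          rw [Finset.sum_const, Finset.card_range, smul_eq_mul]
      _ ≤ ∑ A ∈ range B, (h * cnt q d tw t1 m (t - Phi q d tw t1 m A) + h * e) :=
          Finset.sum_le_sum (fun A _ => (hpt A).2)
      _ = (∑ A ∈ range B, h * cnt q d tw t1 m (t - Phi q d tw t1 m A)) + B * (h * e) := by
          rw [Finset.sum_add_distrib, Finset.sum_const, Finset.card_range, smul_eq_mul]
      _ = h * (∑ A ∈ range B, cnt q d tw t1 m (t - Phi q d tw t1 m A)) + B * (h * e) := by
          rw [Finset.mul_sum]
      _ ≤ h * γN + B * (h * e) := by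
          have := Nat.mul_le_mul_left h hlow
          omega
  -- to the reals
  clear_value γN B m e δR Qm
  have hBQm_le : (B : ℝ) * Qm ≤ (N : ℝ) := by
    rw [hQm]
    exact_mod_cast hBl
  have hBQm_gt : (N : ℝ) < ((B : ℝ) + 1) * Qm := by
    rw [hQm]
    exact_mod_cast hBu
  set W : ℝ := (q : ℝ) ^ (j * L) with hW
  have hWQ : W * (q : ℝ) ^ k0 = Qm := by
    rw [hW, hQm, hmdef, pow_add]
    ring
  clear_value W
  have hupR : (h : ℝ) * (γN : ℝ) ≤ ((B : ℝ) + 1) * (W * (m0 : ℝ) + (h : ℝ) * (e : ℝ)) := by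
    rw [hW]
    exact_mod_cast hup
  have hloR : (B : ℝ) * (W * (m0 : ℝ)) ≤ (h : ℝ) * (γN : ℝ) + (B : ℝ) * ((h : ℝ) * (e : ℝ)) := by
    rw [hW]
    exact_mod_cast hlo
  have hWm0 : W * (m0 : ℝ) = δR * (h : ℝ) * Qm := by
    rw [← hδprod, ← hWQ]
    ring
  have hδQm : δR * Qm ≤ (ε / 4) * (N : ℝ) := by
    have h1 : δR * Qm ≤ 1 * Qm := mul_le_mul_of_nonneg_right hδ1 (le_of_lt hQmpos)
    linarith
  have heN : (e : ℝ) ≤ (ε / 4) * Qm := le_of_lt hecast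
  have hg2 : (γN : ℝ) ≤ ((B : ℝ) + 1) * (δR * Qm + (e : ℝ)) := by
    have h1 : (h : ℝ) * (γN : ℝ) ≤ (h : ℝ) * (((B : ℝ) + 1) * (δR * Qm + (e : ℝ))) := by
      calc (h : ℝ) * (γN : ℝ) ≤ ((B : ℝ) + 1) * (W * (m0 : ℝ) + (h : ℝ) * (e : ℝ)) := hupR
        _ = (h : ℝ) * (((B : ℝ) + 1) * (δR * Qm + (e : ℝ))) := by rw [hWm0]; ring
    exact le_of_mul_le_mul_left h1 hh0R
  have hg3 : δR * ((B : ℝ) * Qm) ≤ (γN : ℝ) + (B : ℝ) * (e : ℝ) := by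
    have h1 : (h : ℝ) * (δR * ((B : ℝ) * Qm)) ≤ (h : ℝ) * ((γN : ℝ) + (B : ℝ) * (e : ℝ)) := by
      calc (h : ℝ) * (δR * ((B : ℝ) * Qm)) = (B : ℝ) * (W * (m0 : ℝ)) := by rw [hWm0]; ring
        _ ≤ (h : ℝ) * (γN : ℝ) + (B : ℝ) * ((h : ℝ) * (e : ℝ)) := hloR
        _ = (h : ℝ) * ((γN : ℝ) + (B : ℝ) * (e : ℝ)) := by ring
    exact le_of_mul_le_mul_left h1 hh0R
  have hB0 : (0 : ℝ) ≤ (B : ℝ) := Nat.cast_nonneg B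
  have hBe : (B : ℝ) * (e : ℝ) ≤ (ε / 4) * (N : ℝ) := by
    calc (B : ℝ) * (e : ℝ) ≤ (B : ℝ) * ((ε / 4) * Qm) := mul_le_mul_of_nonneg_left heN hB0
      _ = (ε / 4) * ((B : ℝ) * Qm) := by ring
      _ ≤ (ε / 4) * (N : ℝ) := mul_le_mul_of_nonneg_left hBQm_le (by linarith)
  have he1 : (e : ℝ) ≤ (ε / 4) * (N : ℝ) := by
    calc (e : ℝ) ≤ (ε / 4) * Qm := heN
      _ ≤ (ε / 4) * (N : ℝ) := mul_le_mul_of_nonneg_left hQmN (by linarith)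
  have hεN : (0 : ℝ) < ε * (N : ℝ) := mul_pos hε hNR0
  have hδB : δR * ((B : ℝ) * Qm) ≤ δR * (N : ℝ) := mul_le_mul_of_nonneg_left hBQm_le hδ0
  rw [Real.dist_eq, abs_sub_lt_iff]
  constructor
  · rw [sub_lt_iff_lt_add, div_lt_iff₀ hNR0]
    linarith only [hg2, hδB, hδQm, hBe, he1, hεN]
  · rw [sub_lt_iff_lt_add]
    refine (mul_lt_mul_iff_of_pos_right hNR0).mp ?_
    have hdiv : ((γN : ℝ) / (N : ℝ)) * (N : ℝ) = (γN : ℝ) :=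
      div_mul_cancel₀ _ (ne_of_gt hNR0)
    have hδN : δR * (N : ℝ) ≤ δR * (((B : ℝ) + 1) * Qm) :=
      mul_le_mul_of_nonneg_left (le_of_lt hBQm_gt) hδ0
    linarith only [hg3, hδN, hδQm, hBe, hεN, hdiv]

theorem stmt_8 (q d : ℕ) (hq : 2 ≤ q) (hd : 2 ≤ d) (tw t1 t0 : ℤ) :
    ∃ L : ℝ, Tendsto (fun N : ℕ => (gamma q d 0 tw 0 t1 t0 N : ℝ) / N) atTop (nhds L) := by
  classical
  obtain ⟨δ, hδ⟩ := main_count q d hq hd tw t1 (-(t0 : ZMod d))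
  refine ⟨δ, ?_⟩
  have hcard : ∀ N, gamma q d 0 tw 0 t1 t0 N
      = ((Finset.range N).filter (fun n => Gf q d tw t1 n = -(t0 : ZMod d))).card := by
    intro N
    rw [gamma]
    refine congrArg Finset.card (Finset.filter_congr fun n _ => ?_)
    have h1 : (0 * (uq q n : ℤ) + tw * (wq q n : ℤ) + 0 * ((n * (n + 1) / 2 : ℕ) : ℤ)
        + t1 * (n : ℤ) + t0) = tw * (wq q n : ℤ) + t1 * (n : ℤ) + t0 := by ring
    rw [h1]
    constructor
    · intro hmod
      have hdvd : (d : ℤ) ∣ (tw * (wq q n : ℤ) + t1 * (n : ℤ) + t0) :=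
        Int.dvd_of_emod_eq_zero hmod
      have hz : ((tw * (wq q n : ℤ) + t1 * (n : ℤ) + t0 : ℤ) : ZMod d) = 0 :=
        (ZMod.intCast_zmod_eq_zero_iff_dvd _ d).mpr hdvd
      push_cast at hz
      rw [Gf]
      linear_combination hz
    · intro hGf
      apply Int.emod_eq_zero_of_dvd
      apply (ZMod.intCast_zmod_eq_zero_iff_dvd _ d).mp
      push_cast
      rw [Gf] at hGf
      linear_combination hGf
  have hfun : (fun N : ℕ => (gamma q d 0 tw 0 t1 t0 N : ℝ) / N)
      = (fun N : ℕ => ((((Finset.range N).filter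
          (fun n => Gf q d tw t1 n = -(t0 : ZMod d))).card : ℝ) / N)) := by
    funext N
    rw [hcard N]
  rw [hfun]
  exact hδ
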